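/- arXiv:2311.07554 — 2 statements merged into one kernel-verified Lean document; each statement's English description precedes it below -/
import Mathlib

section
/- Let G be a simple graph on a finite vertex set V with edge set E(G), and let p : E(G) → ℝ with 0 ≤ p(e) ≤ 1 for all edges e. For each subset E' ⊆ E(G), let w(E') = (∏_{e∈E'} p(e)) · (∏_{e∈E(G)\E'} (1−p(e))), and let reach_{E'}(S) = {u ∈ V : there exists s ∈ S with u reachable from s in the spanning subgraph of G with edge set E'}. Define σ(S) = ∑_{E' ⊆ E(G)} w(E') · |reach_{E'}(S)|. Then σ is monotone (σ(X) ≤ σ(Y) whenever X ⊆ Y) and submodular (σ(X ∪ {v}) − σ(X) ≥ σ(Y ∪ {v}) − σ(Y) for all X ⊆ Y and v ∉ Y). -/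
open Finset

lemma IC_ncard_diff_lemma {V : Type*} [Fintype V] (A B C : Set V) (hAB : A ⊆ B) :
    (B ∪ C).ncard + A.ncard ≤ (A ∪ C).ncard + B.ncard := by
  have h1 : (A ∪ C).ncard = A.ncard + (C \ A).ncard := by
    rw [← Set.union_diff_self, Set.ncard_union_eq Set.disjoint_sdiff_right
      (Set.toFinite _) (Set.toFinite _)]
  have h2 : (B ∪ C).ncard = B.ncard + (C \ B).ncard := by
    rw [← Set.union_diff_self, Set.ncard_union_eq Set.disjoint_sdiff_right
      (Set.toFinite _) (Set.toFinite _)]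
  have h3 : (C \ B).ncard ≤ (C \ A).ncard :=
    Set.ncard_le_ncard (Set.diff_subset_diff_right hAB) (Set.toFinite _)
  omega

/-- The influence spread `σ(S)` in the Independent Cascade model on an
undirected graph `G` with edge probabilities `p` is monotone and submodular. -/
theorem IC_influence_monotone_submodular
    {V : Type*} [Fintype V] [DecidableEq V]
    (G : SimpleGraph V) [Fintype G.edgeSet]
    (p : Sym2 V → ℝ) (hp : ∀ e ∈ G.edgeSet, 0 ≤ p e ∧ p e ≤ 1) :
    let reach : Finset (Sym2 V) → Set V → Set V := fun E' S =>
      {u | ∃ s ∈ S, (SimpleGraph.fromEdgeSet (↑E' : Set (Sym2 V))).Reachable s u}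
    let w : Finset (Sym2 V) → ℝ := fun E' =>
      (∏ e ∈ E', p e) * ∏ e ∈ G.edgeFinset \ E', (1 - p e)
    let σ : Set V → ℝ := fun S =>
      ∑ E' ∈ G.edgeFinset.powerset, w E' * ((reach E' S).ncard : ℝ)
    (∀ X Y : Set V, X ⊆ Y → σ X ≤ σ Y) ∧
    (∀ X Y : Set V, ∀ v : V, X ⊆ Y → v ∉ Y →
      σ (X ∪ {v}) - σ X ≥ σ (Y ∪ {v}) - σ Y) := by
  intro reach w σ
  have hw : ∀ E' ∈ G.edgeFinset.powerset, 0 ≤ w E' := by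
    intro E' hE'
    rw [Finset.mem_powerset] at hE'
    apply mul_nonneg
    · exact Finset.prod_nonneg fun e he =>
        (hp e (SimpleGraph.mem_edgeFinset.mp (hE' he))).1
    · refine Finset.prod_nonneg fun e he => ?_
      have := (hp e (SimpleGraph.mem_edgeFinset.mp (Finset.mem_sdiff.mp he).1)).2
      linarith
  have hmono_reach : ∀ E' (X Y : Set V), X ⊆ Y → reach E' X ⊆ reach E' Y := by
    intro E' X Y hXY u hu
    obtain ⟨s, hs, hr⟩ := hu
    exact ⟨s, hXY hs, hr⟩
  have hreach_union : ∀ E' (X Y : Set V),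
      reach E' (X ∪ Y) = reach E' X ∪ reach E' Y := by
    intro E' X Y
    ext u
    simp only [reach, Set.mem_setOf_eq, Set.mem_union]
    constructor
    · rintro ⟨s, hs | hs, hr⟩
      · exact Or.inl ⟨s, hs, hr⟩
      · exact Or.inr ⟨s, hs, hr⟩
    · rintro (⟨s, hs, hr⟩ | ⟨s, hs, hr⟩)
      exacts [⟨s, Or.inl hs, hr⟩, ⟨s, Or.inr hs, hr⟩]
  constructor
  · intro X Y hXY
    apply Finset.sum_le_sum
    intro E' hE'
    apply mul_le_mul_of_nonneg_left _ (hw E' hE')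
    exact_mod_cast Set.ncard_le_ncard (hmono_reach E' X Y hXY) (Set.toFinite _)
  · intro X Y v hXY hv
    rw [ge_iff_le, sub_le_sub_iff]
    show (∑ E' ∈ G.edgeFinset.powerset, w E' * ((reach E' (Y ∪ {v})).ncard : ℝ)) +
        ∑ E' ∈ G.edgeFinset.powerset, w E' * ((reach E' X).ncard : ℝ) ≤ _
    rw [← Finset.sum_add_distrib, ← Finset.sum_add_distrib]
    apply Finset.sum_le_sum
    intro E' hE'
    rw [← mul_add, ← mul_add]
    apply mul_le_mul_of_nonneg_left _ (hw E' hE')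
    have key := IC_ncard_diff_lemma (reach E' X) (reach E' Y) (reach E' {v})
      (hmono_reach E' X Y hXY)
    rw [hreach_union E' Y {v}, hreach_union E' X {v}]
    exact_mod_cast key
end

section
/- Let V be a finite type and f : Finset V → ℝ a set function with f(∅) = 0 that is monotone and submodular. Let k ≥ 1 with k ≤ |V|, and let ∅ = S_0 ⊆ S_1 ⊆ … ⊆ S_k be a greedy sequence: for each i, S_{i+1} = S_i ∪ {v_i} where v_i ∉ S_i satisfies f(S_i ∪ {v_i}) ≥ f(S_i ∪ {u}) for every u ∉ S_i. Then for every T ⊆ V with |T| ≤ k, one has f(S_k) ≥ (1 − (1 − 1/k)^k) · f(T). -/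
lemma greedy_sum_marginal {V : Type*} [DecidableEq V]
    (f : Finset V → ℝ)
    (hsub : ∀ X Y : Finset V, ∀ v : V, X ⊆ Y → v ∉ Y →
      f (insert v X) - f X ≥ f (insert v Y) - f Y)
    (X : Finset V) : ∀ A : Finset V, Disjoint X A →
      f (X ∪ A) ≤ f X + ∑ u ∈ A, (f (insert u X) - f X) := by
  intro A
  induction A using Finset.induction_on with
  | empty => simp
  | @insert a A ha ih =>
    intro hdisj
    have haX : a ∉ X := by
      intro h
      exact (Finset.disjoint_left.mp hdisj h) (Finset.mem_insert_self a A)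
    have hdA : Disjoint X A :=
      hdisj.mono_right (Finset.subset_insert a A)
    have haXA : a ∉ X ∪ A := by
      simp [haX, ha]
    have h1 : f (insert a (X ∪ A)) - f (X ∪ A) ≤ f (insert a X) - f X :=
      hsub X (X ∪ A) a Finset.subset_union_left haXA
    have h2 : X ∪ insert a A = insert a (X ∪ A) := by
      ext x; simp [or_assoc, or_left_comm]
    rw [h2, Finset.sum_insert ha]
    have := ih hdA
    linarith

/-- Greedy guarantee for monotone submodular maximization: if the greedy
sequence `S 0 = ∅`, `S (i+1) = insert (v i) (S i)` always inserts an element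
of maximal marginal gain, then for every `T` with `|T| ≤ k`,
`f (S k) ≥ (1 − (1 − 1/k)^k) · f T`. -/
theorem greedy_submodular_guarantee
    {V : Type*} [Fintype V] [DecidableEq V]
    (f : Finset V → ℝ) (hf0 : f ∅ = 0)
    (hmono : ∀ X Y : Finset V, X ⊆ Y → f X ≤ f Y)
    (hsub : ∀ X Y : Finset V, ∀ v : V, X ⊆ Y → v ∉ Y →
      f (insert v X) - f X ≥ f (insert v Y) - f Y)
    (k : ℕ) (hk : 1 ≤ k) (hkcard : k ≤ Fintype.card V)
    (S : ℕ → Finset V) (v : ℕ → V)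
    (hS0 : S 0 = ∅)
    (hgreedy : ∀ i < k, v i ∉ S i ∧ S (i + 1) = insert (v i) (S i) ∧
      ∀ u : V, u ∉ S i → f (insert (v i) (S i)) ≥ f (insert u (S i))) :
    ∀ T : Finset V, T.card ≤ k →
      f (S k) ≥ (1 - (1 - 1 / (k : ℝ)) ^ k) * f T := by
  intro T hT
  have hk0 : (0 : ℝ) < (k : ℝ) := by positivity
  have hfac : (0 : ℝ) ≤ 1 - 1 / (k : ℝ) := by
    have : 1 / (k : ℝ) ≤ 1 := by
      rw [div_le_one hk0]
      exact_mod_cast hk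
    linarith
  -- key step inequality
  have hstep : ∀ i < k, f T - f (S i) ≤ (k : ℝ) * (f (S (i+1)) - f (S i)) := by
    intro i hi
    obtain ⟨hv, hSi, hbest⟩ := hgreedy i hi
    set Δ : ℝ := f (S (i+1)) - f (S i) with hΔ
    have hΔ0 : 0 ≤ Δ := by
      have := hmono (S i) (S (i+1)) (by rw [hSi]; exact Finset.subset_insert _ _)
      simp [hΔ]; linarith
    have hsum : f (S i ∪ (T \ S i)) ≤ f (S i) + ∑ u ∈ T \ S i, (f (insert u (S i)) - f (S i)) :=
      greedy_sum_marginal f hsub (S i) (T \ S i) Finset.disjoint_sdiff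
    have hsum2 : ∑ u ∈ T \ S i, (f (insert u (S i)) - f (S i)) ≤ (T \ S i).card • Δ := by
      apply Finset.sum_le_card_nsmul
      intro u hu
      have hu' : u ∉ S i := (Finset.mem_sdiff.mp hu).2
      have := hbest u hu'
      rw [hΔ, hSi]
      linarith
    have hcard : ((T \ S i).card : ℝ) ≤ (k : ℝ) := by
      exact_mod_cast le_trans (Finset.card_le_card (Finset.sdiff_subset)) hT
    have hsum3 : ((T \ S i).card : ℝ) * Δ ≤ (k : ℝ) * Δ :=
      mul_le_mul_of_nonneg_right hcard hΔ0
    have hTle : f T ≤ f (S i ∪ (T \ S i)) := by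
      apply hmono
      intro x hx
      by_cases h : x ∈ S i <;> simp [h, hx]
    rw [nsmul_eq_mul] at hsum2
    linarith
  -- induction
  have hmain : ∀ i ≤ k, f T - f (S i) ≤ (1 - 1 / (k : ℝ)) ^ i * f T := by
    intro i
    induction i with
    | zero => intro _; simp [hS0, hf0]
    | succ i ih =>
      intro hik
      have hi : i < k := hik
      have hrec := hstep i hi
      have hI := ih (le_of_lt hi)
      -- k * g(i+1) ≤ (k-1) * g i
      have h1 : f T - f (S (i+1)) ≤ (1 - 1/(k:ℝ)) * (f T - f (S i)) := by
        have hne : (k : ℝ) ≠ 0 := ne_of_gt hk0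
        have : (k : ℝ) * (f T - f (S (i+1))) ≤ ((k:ℝ) - 1) * (f T - f (S i)) := by
          nlinarith
        have h2 : (1 - 1/(k:ℝ)) * (f T - f (S i)) = (((k:ℝ) - 1) * (f T - f (S i))) / k := by
          field_simp
        rw [h2, le_div_iff₀ hk0]
        linarith
      calc f T - f (S (i+1)) ≤ (1 - 1/(k:ℝ)) * (f T - f (S i)) := h1
        _ ≤ (1 - 1/(k:ℝ)) * ((1 - 1 / (k : ℝ)) ^ i * f T) :=
            mul_le_mul_of_nonneg_left hI hfac
        _ = (1 - 1 / (k : ℝ)) ^ (i+1) * f T := by ring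
  have := hmain k le_rfl
  have hexp : (1 - (1 - 1 / (k : ℝ)) ^ k) * f T = f T - (1 - 1 / (k : ℝ)) ^ k * f T := by ring
  rw [ge_iff_le, hexp]
  linarith
end
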